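/- Let Y₁,…,Yₙ be i.i.d. with an even continuous density φ on ℝ, with cdf Φ and survival function Φ̄ = 1-Φ. Let α ∈ (0,1) and k ∈ {1,…,⌊n/2⌋} with k > 2·log(4/α), and let t_{α,k} be defined by Φ̄(t_{α,k}/2) = (k/n)·[1 - √(2·log(4/α)/k)]. Then P(Y₍ₙ₋ₖ₊₁₎ - Y₍ₖ₎ > t_{α,k}) ≤ α; consequently the (1-α)-quantile q_{α,k} of the spacing Y₍ₙ₋ₖ₊₁₎ - Y₍ₖ₎ satisfies q_{α,k} ≤ t_{α,k}. -/

import Mathlib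

open MeasureTheory Filter Set

noncomputable section

/-- The measure on `ℝ` with Lebesgue density `f`. -/
def pdfMeasure (f : ℝ → ℝ) : Measure ℝ :=
  MeasureTheory.volume.withDensity (fun x => ENNReal.ofReal (f x))

/-- The joint law of `n` i.i.d. observations with common density `f`. -/
def sampleMeasure (n : ℕ) (f : ℝ → ℝ) : Measure (Fin n → ℝ) :=
  Measure.pi (fun _ : Fin n => pdfMeasure f)

/-- The `k`-th order statistic (for `1 ≤ k ≤ n`) of the sample `ω`. -/
def oStat {n : ℕ} (k : ℕ) (ω : Fin n → ℝ) : ℝ :=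
  if h : 1 ≤ k ∧ k ≤ n then ω (Tuple.sort ω ⟨k - 1, by omega⟩) else 0

/-- The spacing `X_{(n-k+1)} - X_{(k)}` of the order statistics. -/
def spacing {n : ℕ} (k : ℕ) (ω : Fin n → ℝ) : ℝ :=
  oStat (n - k + 1) ω - oStat k ω

/-- `K_n = {2^j : 0 ≤ j ≤ ⌊log₂ (n/2)⌋}`. -/
def Kfin (n : ℕ) : Finset ℕ :=
  (Finset.range (Nat.log 2 (n / 2) + 1)).image (fun j => 2 ^ j)

/-- The `(1-u)`-quantile of the spacing `X_{(n-k+1)} - X_{(k)}` under the null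
hypothesis (sample of density `φ`; under `H₀` this law does not depend on the
translation parameter). -/
def spacingQuantile (n : ℕ) (φ : ℝ → ℝ) (u : ℝ) (k : ℕ) : ℝ :=
  sInf {t : ℝ | sampleMeasure n φ {ω | spacing k ω > t} ≤ ENNReal.ofReal u}

/-- The corrected level `α_n`. -/
def alphaN (n : ℕ) (φ : ℝ → ℝ) (α : ℝ) : ℝ :=
  sSup {u : ℝ | u ∈ Set.Ioo (0:ℝ) 1 ∧
    sampleMeasure n φ {ω | ∃ k ∈ Kfin n, spacing k ω > spacingQuantile n φ u k}
      ≤ ENNReal.ofReal α}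

/-- The rejection region of the multiple spacing test `Ψ_α`. -/
def psiReject (n : ℕ) (φ : ℝ → ℝ) (α : ℝ) : Set (Fin n → ℝ) :=
  {ω | ∃ k ∈ Kfin n, spacing k ω > spacingQuantile n φ (alphaN n φ α) k}

/-- The empirical (unbiased) variance `S_n²`. -/
def varStat {n : ℕ} (ω : Fin n → ℝ) : ℝ :=
  (∑ i, (ω i - (∑ j, ω j) / (n : ℝ)) ^ 2) / ((n : ℝ) - 1)

/-- The `(1-α)`-quantile of `S_n²` under the null hypothesis. -/
def varQuantile (n : ℕ) (φ : ℝ → ℝ) (α : ℝ) : ℝ :=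
  sInf {t : ℝ | sampleMeasure n φ {ω | varStat ω > t} ≤ ENNReal.ofReal α}

/-- The standard Gaussian density. -/
def phiG (x : ℝ) : ℝ := (Real.sqrt (2 * Real.pi))⁻¹ * Real.exp (-x ^ 2 / 2)

/-- A two-component Gaussian mixture density. -/
def mixG (ε μ₁ μ₂ : ℝ) : ℝ → ℝ := fun x => (1 - ε) * phiG (x - μ₁) + ε * phiG (x - μ₂)

/-- Survival function `Φ̄ = 1 - Φ` of the density `φ`. -/
def Phibar (φ : ℝ → ℝ) (u : ℝ) : ℝ := 1 - ∫ x in Set.Iic u, φ x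

/-- The standard Laplace density. -/
def phiL (x : ℝ) : ℝ := (1 / 2) * Real.exp (-|x|)

/-- A two-component Laplace mixture density. -/
def mixL (ε μ₁ μ₂ : ℝ) : ℝ → ℝ := fun x => (1 - ε) * phiL (x - μ₁) + ε * phiL (x - μ₂)

/-- The threshold `ρ(k,n) = k/n + (1 + √(1+2kβ))/(nβ)`. -/
def rhoKn (n k : ℕ) (β : ℝ) : ℝ :=
  ((k : ℝ) / (n : ℝ)) + (1 + Real.sqrt (1 + 2 * (k : ℝ) * β)) / ((n : ℝ) * β)

section StmtElevenHelpers

open scoped ENNReal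

lemma hw_le_card_of_oStat_gt {n k : ℕ} (hk1 : 1 ≤ k) (hkn : k ≤ n) (ω : Fin n → ℝ) (s : ℝ)
    (h : s < oStat (n - k + 1) ω) :
    k ≤ (Finset.univ.filter (fun i => ω i ∈ Set.Ioi s)).card := by
  have hcond : 1 ≤ n - k + 1 ∧ n - k + 1 ≤ n := by omega
  rw [oStat, dif_pos hcond] at h
  set σ := Tuple.sort ω with hσ
  have hmono := Tuple.monotone_sort ω
  have hidx : (⟨n - k + 1 - 1, by omega⟩ : Fin n) = ⟨n - k, by omega⟩ := by simp
  rw [hidx] at h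
  have hsub : (Finset.Ici (⟨n - k, by omega⟩ : Fin n)).image σ ⊆
      Finset.univ.filter (fun i => ω i ∈ Set.Ioi s) := by
    intro j hj
    simp only [Finset.mem_image, Finset.mem_Ici] at hj
    obtain ⟨i, hi, rfl⟩ := hj
    simp only [Finset.mem_filter, Finset.mem_univ, Set.mem_Ioi, true_and]
    exact lt_of_lt_of_le h (hmono hi)
  calc k = n - (n - k) := by omega
    _ = (Finset.Ici (⟨n - k, by omega⟩ : Fin n)).card := by rw [Fin.card_Ici]
    _ = ((Finset.Ici (⟨n - k, by omega⟩ : Fin n)).image σ).card :=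
        (Finset.card_image_of_injective _ σ.injective).symm
    _ ≤ _ := Finset.card_le_card hsub

lemma hw_le_card_of_oStat_lt {n k : ℕ} (hk1 : 1 ≤ k) (hkn : k ≤ n) (ω : Fin n → ℝ) (s : ℝ)
    (h : oStat k ω < s) :
    k ≤ (Finset.univ.filter (fun i => ω i ∈ Set.Iio s)).card := by
  have hcond : 1 ≤ k ∧ k ≤ n := ⟨hk1, hkn⟩
  rw [oStat, dif_pos hcond] at h
  set σ := Tuple.sort ω with hσ
  have hmono := Tuple.monotone_sort ω
  have hsub : (Finset.Iic (⟨k - 1, by omega⟩ : Fin n)).image σ ⊆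
      Finset.univ.filter (fun i => ω i ∈ Set.Iio s) := by
    intro j hj
    simp only [Finset.mem_image, Finset.mem_Iic] at hj
    obtain ⟨i, hi, rfl⟩ := hj
    simp only [Finset.mem_filter, Finset.mem_univ, Set.mem_Iio, true_and]
    exact lt_of_le_of_lt (hmono hi) h
  calc k = (k - 1) + 1 := by omega
    _ = (Finset.Iic (⟨k - 1, by omega⟩ : Fin n)).card := by rw [Fin.card_Iic]
    _ = ((Finset.Iic (⟨k - 1, by omega⟩ : Fin n)).image σ).card :=
        (Finset.card_image_of_injective _ σ.injective).symm
    _ ≤ _ := Finset.card_le_card hsub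

lemma hw_oStat_le_oStat {n : ℕ} (a b : ℕ) (ha : 1 ≤ a) (hab : a ≤ b) (hb : b ≤ n)
    (ω : Fin n → ℝ) : oStat a ω ≤ oStat b ω := by
  rw [oStat, oStat, dif_pos ⟨ha, le_trans hab hb⟩, dif_pos ⟨le_trans ha hab, hb⟩]
  exact Tuple.monotone_sort ω (by simp [Fin.mk_le_mk]; omega)

lemma hw_pi_count_mul_le (μ : Measure ℝ) [SigmaFinite μ] (n : ℕ) (A : Set ℝ)
    [DecidablePred (· ∈ A)] (k : ℕ) (r : ℝ≥0∞) (hr : 1 ≤ r) :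
    Measure.pi (fun _ : Fin n => μ) {ω | k ≤ (Finset.univ.filter (fun i => ω i ∈ A)).card} * r ^ k
      ≤ (r * μ A + μ Aᶜ) ^ n := by
  classical
  set ν := Measure.pi (fun _ : Fin n => μ)
  set F : Finset (Finset (Fin n)) := Finset.univ.filter (fun T => k ≤ T.card) with hF
  set E : Finset (Fin n) → Set (Fin n → ℝ) :=
    fun T => Set.pi Set.univ (fun i => if i ∈ T then A else Aᶜ) with hE
  have hsub : {ω : Fin n → ℝ | k ≤ (Finset.univ.filter (fun i => ω i ∈ A)).card}
      ⊆ ⋃ T ∈ F, E T := by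
    intro ω hω
    have h1 : (Finset.univ.filter (fun i => ω i ∈ A)) ∈ F := by simpa [hF] using hω
    refine Set.mem_biUnion h1 ?_
    intro i _
    by_cases h : ω i ∈ A <;> simp [h]
  have hμE : ∀ T : Finset (Fin n), ν (E T) = μ A ^ T.card * μ Aᶜ ^ (n - T.card) := by
    intro T
    rw [hE, Measure.pi_pi]
    simp only [apply_ite μ, Finset.prod_ite, Finset.prod_const, Finset.filter_mem_eq_inter,
      Finset.univ_inter, Finset.filter_not, Finset.card_sdiff_of_subset (Finset.subset_univ _),
      Finset.card_univ, Fintype.card_fin]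
  have h1 : ν {ω | k ≤ (Finset.univ.filter (fun i => ω i ∈ A)).card} ≤ ∑ T ∈ F, ν (E T) :=
    le_trans (measure_mono hsub) (measure_biUnion_finset_le F E)
  have h2 : (∑ T ∈ F, ν (E T)) * r ^ k
      ≤ ∑ T : Finset (Fin n), (r * μ A) ^ T.card * μ Aᶜ ^ (n - T.card) := by
    rw [Finset.sum_mul]
    refine le_trans (Finset.sum_le_sum (fun T hT => ?_))
      (Finset.sum_le_sum_of_subset (Finset.filter_subset _ _))
    rw [hμE T]
    have hTk : k ≤ T.card := (Finset.mem_filter.mp hT).2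
    have hk : r ^ k ≤ r ^ T.card := pow_le_pow_right₀ hr hTk
    calc μ A ^ T.card * μ Aᶜ ^ (n - T.card) * r ^ k
        ≤ μ A ^ T.card * μ Aᶜ ^ (n - T.card) * r ^ T.card := mul_le_mul_right hk _
      _ = (r * μ A) ^ T.card * μ Aᶜ ^ (n - T.card) := by ring
  have h3 : ∑ T : Finset (Fin n), (r * μ A) ^ T.card * μ Aᶜ ^ (n - T.card)
      = (r * μ A + μ Aᶜ) ^ n := by
    have h := Finset.prod_add (fun _ : Fin n => r * μ A) (fun _ => μ Aᶜ) Finset.univ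
    simp only [Finset.prod_const, Finset.card_sdiff_of_subset (Finset.subset_univ _), Finset.card_univ,
      Fintype.card_fin, Finset.powerset_univ] at h
    rw [← h]
  calc ν {ω | k ≤ (Finset.univ.filter (fun i => ω i ∈ A)).card} * r ^ k
      ≤ (∑ T ∈ F, ν (E T)) * r ^ k := mul_le_mul_left h1 _
    _ ≤ _ := h2
    _ = _ := h3

lemma hw_one_sub_mul_exp_le {x : ℝ} (h0 : 0 ≤ x) (h1 : x ≤ 1) :
    (1 - x) * Real.exp x ≤ Real.exp (-x ^ 2 / 2) := by
  have key : ∀ y ∈ Set.Icc (0:ℝ) 1, (1 - y) * Real.exp (y + y ^ 2 / 2) ≤ 1 := by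
    have hderiv : ∀ y ∈ interior (Set.Icc (0:ℝ) 1),
        HasDerivAt (fun z => (1 - z) * Real.exp (z + z ^ 2 / 2))
          (-(y ^ 2) * Real.exp (y + y ^ 2 / 2)) y := by
      intro y _
      have h₁ : HasDerivAt (fun z : ℝ => 1 - z) (-1) y := by
        simpa using (hasDerivAt_id y).const_sub 1
      have h₂ : HasDerivAt (fun z : ℝ => z + z ^ 2 / 2) (1 + y) y := by
        have h := (hasDerivAt_id y).add ((hasDerivAt_pow 2 y).div_const 2)
        exact h.congr_deriv (by push_cast; ring)
      have h₃ := h₂.exp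
      have := h₁.mul h₃
      exact this.congr_deriv (by ring)
    have hanti : AntitoneOn (fun z => (1 - z) * Real.exp (z + z ^ 2 / 2)) (Set.Icc (0:ℝ) 1) := by
      apply antitoneOn_of_deriv_nonpos (convex_Icc 0 1)
      · exact (Continuous.mul (by continuity)
          (Real.continuous_exp.comp (by continuity))).continuousOn
      · intro y hy
        exact (hderiv y hy).differentiableAt.differentiableWithinAt
      · intro y hy
        rw [(hderiv y hy).deriv]
        have : (0:ℝ) ≤ y ^ 2 := sq_nonneg y
        nlinarith [Real.exp_pos (y + y ^ 2 / 2)]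
    intro y hy
    have := hanti (Set.left_mem_Icc.mpr zero_le_one) hy hy.1
    simpa using this
  have hk := key x ⟨h0, h1⟩
  have hsplit : Real.exp (x + x ^ 2 / 2) = Real.exp x * Real.exp (x ^ 2 / 2) := by
    rw [← Real.exp_add]
  rw [hsplit] at hk
  have h2 : Real.exp (-x ^ 2 / 2) * Real.exp (x ^ 2 / 2) = 1 := by
    rw [← Real.exp_add]; ring_nf; exact Real.exp_zero
  nlinarith [Real.exp_pos (x ^ 2 / 2), Real.exp_pos x]

lemma hw_int_phi {φ : ℝ → ℝ} (hφint : ∫ x, φ x = 1) : Integrable φ := by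
  by_contra h
  rw [integral_undef h] at hφint
  norm_num at hφint

lemma hw_pdf_apply {φ : ℝ → ℝ} (hφnn : ∀ x, 0 ≤ φ x) (hφint : ∫ x, φ x = 1)
    {A : Set ℝ} (hA : MeasurableSet A) :
    pdfMeasure φ A = ENNReal.ofReal (∫ x in A, φ x) := by
  rw [pdfMeasure, withDensity_apply _ hA]
  rw [ofReal_integral_eq_lintegral_ofReal ((hw_int_phi hφint).restrict)
    (Filter.Eventually.of_forall hφnn)]

lemma hw_pdf_prob {φ : ℝ → ℝ} (hφnn : ∀ x, 0 ≤ φ x) (hφint : ∫ x, φ x = 1) :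
    IsProbabilityMeasure (pdfMeasure φ) := by
  constructor
  rw [hw_pdf_apply hφnn hφint MeasurableSet.univ]
  simp [hφint]

lemma hw_int_Ioi {φ : ℝ → ℝ} (hφnn : ∀ x, 0 ≤ φ x) (hφint : ∫ x, φ x = 1) (u : ℝ) :
    ∫ x in Set.Ioi u, φ x = Phibar φ u := by
  have h := integral_add_compl (measurableSet_Iic (a := u)) (hw_int_phi hφint)
  rw [compl_Iic] at h
  rw [Phibar, ← hφint]
  linarith

lemma hw_int_Iio_neg {φ : ℝ → ℝ} (hφnn : ∀ x, 0 ≤ φ x) (hφint : ∫ x, φ x = 1)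
    (hφeven : ∀ x, φ (-x) = φ x) (u : ℝ) :
    ∫ x in Set.Iio (-u), φ x = Phibar φ u := by
  rw [← integral_Iic_eq_integral_Iio, ← hw_int_Ioi hφnn hφint u]
  rw [← integral_comp_neg_Ioi]
  simp only [hφeven]

end StmtElevenHelpers

set_option maxHeartbeats 1000000 in
/-- upper bound `q_{α,k} ≤ t_{α,k}` on the quantile of the spacing
`Y_{(n-k+1)} - Y_{(k)}` for an even continuous density. -/
theorem stmt11 (n : ℕ) (φ : ℝ → ℝ) (hφcont : Continuous φ) (hφnn : ∀ x, 0 ≤ φ x)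
    (hφint : ∫ x, φ x = 1) (hφeven : ∀ x, φ (-x) = φ x)
    (α : ℝ) (hα : α ∈ Set.Ioo (0:ℝ) 1)
    (k : ℕ) (hk1 : 1 ≤ k) (hkn : k ≤ n / 2)
    (hklog : 2 * Real.log (4 / α) < (k : ℝ))
    (t : ℝ)
    (hteq : Phibar φ (t / 2)
      = ((k : ℝ) / (n : ℝ)) * (1 - Real.sqrt (2 * Real.log (4 / α) / (k : ℝ)))) :
    sampleMeasure n φ {ω | spacing k ω > t} ≤ ENNReal.ofReal α ∧
    spacingQuantile n φ α k ≤ t := by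
  classical
  obtain ⟨hα0, hα1⟩ := hα
  have h2k : 2 * k ≤ n := by omega
  have hn0 : 0 < n := by omega
  have hkn' : k ≤ n := by omega
  set L := Real.log (4 / α) with hLdef
  have hL : 0 < L := Real.log_pos (by rw [lt_div_iff₀ hα0]; linarith)
  have hk0 : (0:ℝ) < k := by exact_mod_cast hk1
  set η := Real.sqrt (2 * L / k) with hηdef
  have hηsq : η ^ 2 = 2 * L / k := Real.sq_sqrt (by positivity)
  have hη0 : 0 < η := Real.sqrt_pos.mpr (by positivity)
  have hηsq1 : η ^ 2 < 1 := by
    rw [hηsq, div_lt_one hk0]; linarith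
  have hη1 : η < 1 := by nlinarith
  have h1η : 0 < 1 - η := by linarith
  set p := (k:ℝ) / n * (1 - η) with hpdef
  have hp0 : 0 ≤ p := mul_nonneg (by positivity) (by linarith)
  have hp1 : p ≤ 1 := by
    have hkn2 : (k:ℝ) / n ≤ 1 := by
      rw [div_le_one (by exact_mod_cast hn0)]
      exact_mod_cast hkn'
    nlinarith
  set rr := (1 - η)⁻¹ with hrrdef
  have hrr0 : 0 < rr := inv_pos.mpr h1η
  have hrr1 : 1 ≤ rr := (one_le_inv₀ h1η).mpr (by linarith)
  set r := ENNReal.ofReal rr with hrdef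
  have hr1 : 1 ≤ r := by
    rw [hrdef, ← ENNReal.ofReal_one]
    exact ENNReal.ofReal_le_ofReal hrr1
  have hrtop : r ≠ ⊤ := ENNReal.ofReal_ne_top
  have hrk0 : r ^ k ≠ 0 := pow_ne_zero _ (by
    intro h0
    rw [h0] at hr1
    exact absurd hr1 (by simp))
  have hrktop : r ^ k ≠ ⊤ := ENNReal.pow_ne_top hrtop
  haveI : IsProbabilityMeasure (pdfMeasure φ) := hw_pdf_prob hφnn hφint
  have hpA : pdfMeasure φ (Set.Ioi (t / 2)) = ENNReal.ofReal p := by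
    rw [hw_pdf_apply hφnn hφint measurableSet_Ioi, hw_int_Ioi hφnn hφint, hteq]
  have hpB : pdfMeasure φ (Set.Iio (-(t / 2))) = ENNReal.ofReal p := by
    rw [hw_pdf_apply hφnn hφint measurableSet_Iio, hw_int_Iio_neg hφnn hφint hφeven, hteq]
  have hcompl : ∀ A : Set ℝ, MeasurableSet A → pdfMeasure φ A = ENNReal.ofReal p →
      pdfMeasure φ Aᶜ = ENNReal.ofReal (1 - p) := by
    intro A hA hAp
    rw [measure_compl hA (measure_ne_top _ _), hAp, measure_univ,
      ← ENNReal.ofReal_one, ← ENNReal.ofReal_sub _ hp0]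
  have key : ∀ A : Set ℝ, ∀ _ : DecidablePred (· ∈ A), MeasurableSet A →
      pdfMeasure φ A = ENNReal.ofReal p →
      sampleMeasure n φ {ω | k ≤ (Finset.univ.filter (fun i : Fin n => ω i ∈ A)).card}
        ≤ ENNReal.ofReal (α / 4) := by
    intro A hdec hA hAp
    have hchain := hw_pi_count_mul_le (pdfMeasure φ) n A k r hr1
    rw [hAp, hcompl A hA hAp] at hchain
    have hsum : r * ENNReal.ofReal p + ENNReal.ofReal (1 - p)
        = ENNReal.ofReal (1 + (rr - 1) * p) := by
      rw [hrdef, ← ENNReal.ofReal_mul hrr0.le,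
        ← ENNReal.ofReal_add (mul_nonneg hrr0.le hp0) (by linarith)]
      congr 1
      ring
    have hexp1 : 1 + (rr - 1) * p ≤ Real.exp ((rr - 1) * p) := by
      have := Real.add_one_le_exp ((rr - 1) * p)
      linarith
    have hbase0 : (0:ℝ) ≤ 1 + (rr - 1) * p := by nlinarith
    have hRHS : (r * ENNReal.ofReal p + ENNReal.ofReal (1 - p)) ^ n
        ≤ ENNReal.ofReal (Real.exp ((k:ℝ) * η)) := by
      rw [hsum, ← ENNReal.ofReal_pow hbase0]
      apply ENNReal.ofReal_le_ofReal
      have hnp : (n:ℝ) * ((rr - 1) * p) = (k:ℝ) * η := by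
        rw [hrrdef, hpdef]
        have hn0' : (n:ℝ) ≠ 0 := by positivity
        field_simp
        ring
      calc (1 + (rr - 1) * p) ^ n ≤ (Real.exp ((rr - 1) * p)) ^ n :=
            pow_le_pow_left₀ hbase0 hexp1 n
        _ = Real.exp ((n:ℝ) * ((rr - 1) * p)) := by
            rw [← Real.exp_nat_mul]
        _ = Real.exp ((k:ℝ) * η) := by rw [hnp]
    have hfinal : sampleMeasure n φ
        {ω | k ≤ (Finset.univ.filter (fun i : Fin n => ω i ∈ A)).card}
          ≤ ENNReal.ofReal (Real.exp ((k:ℝ) * η)) / r ^ k := by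
      rw [ENNReal.le_div_iff_mul_le (Or.inl hrk0) (Or.inl hrktop)]
      exact le_trans (by rw [sampleMeasure]; exact hchain) hRHS
    have hdiv : ENNReal.ofReal (Real.exp ((k:ℝ) * η)) / r ^ k
        = ENNReal.ofReal (Real.exp ((k:ℝ) * η) * (1 - η) ^ k) := by
      rw [hrdef, ← ENNReal.ofReal_pow hrr0.le,
        ← ENNReal.ofReal_div_of_pos (pow_pos hrr0 k)]
      congr 1
      rw [hrrdef, inv_pow, div_eq_mul_inv, inv_inv]
    have hbound : Real.exp ((k:ℝ) * η) * (1 - η) ^ k ≤ α / 4 := by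
      have h1 : Real.exp ((k:ℝ) * η) = (Real.exp η) ^ k := by
        rw [← Real.exp_nat_mul]
      have h2 : ((1 - η) * Real.exp η) ^ k ≤ (Real.exp (-η ^ 2 / 2)) ^ k :=
        pow_le_pow_left₀ (by nlinarith [Real.exp_pos η])
          (hw_one_sub_mul_exp_le hη0.le hη1.le) k
      have h4 : (Real.exp (-η ^ 2 / 2)) ^ k = Real.exp (-L) := by
        rw [← Real.exp_nat_mul]
        congr 1
        rw [hηsq]
        field_simp
      have h5 : Real.exp (-L) = α / 4 := by
        rw [hLdef, Real.exp_neg, Real.exp_log (by positivity), inv_div]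
      calc Real.exp ((k:ℝ) * η) * (1 - η) ^ k = ((1 - η) * Real.exp η) ^ k := by
            rw [h1, ← mul_pow]; ring_nf
        _ ≤ (Real.exp (-η ^ 2 / 2)) ^ k := h2
        _ = α / 4 := by rw [h4, h5]
    exact hfinal.trans (le_of_eq_of_le hdiv (ENNReal.ofReal_le_ofReal hbound))
  have hsubset : {ω : Fin n → ℝ | spacing k ω > t} ⊆
      {ω : Fin n → ℝ | k ≤ (Finset.univ.filter (fun i : Fin n => ω i ∈ Set.Ioi (t / 2))).card}
      ∪ {ω : Fin n → ℝ |
          k ≤ (Finset.univ.filter (fun i : Fin n => ω i ∈ Set.Iio (-(t / 2)))).card} := by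
    intro ω hω
    simp only [Set.mem_setOf_eq, gt_iff_lt, spacing] at hω
    by_cases hcase : t / 2 < oStat (n - k + 1) ω
    · exact Or.inl (hw_le_card_of_oStat_gt hk1 hkn' ω (t / 2) hcase)
    · push_neg at hcase
      exact Or.inr (hw_le_card_of_oStat_lt hk1 hkn' ω (-(t / 2)) (by linarith))
  have hpart1 : sampleMeasure n φ {ω | spacing k ω > t} ≤ ENNReal.ofReal α := by
    calc sampleMeasure n φ {ω | spacing k ω > t}
        ≤ sampleMeasure n φ
            {ω : Fin n → ℝ |
              k ≤ (Finset.univ.filter (fun i : Fin n => ω i ∈ Set.Ioi (t / 2))).card}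
          + sampleMeasure n φ
            {ω : Fin n → ℝ |
              k ≤ (Finset.univ.filter (fun i : Fin n => ω i ∈ Set.Iio (-(t / 2)))).card} :=
          le_trans (measure_mono hsubset) (measure_union_le _ _)
      _ ≤ ENNReal.ofReal (α / 4) + ENNReal.ofReal (α / 4) :=
          add_le_add (key _ _ measurableSet_Ioi hpA) (key _ _ measurableSet_Iio hpB)
      _ = ENNReal.ofReal (α / 4 + α / 4) := by
          rw [← ENNReal.ofReal_add (by positivity) (by positivity)]
      _ ≤ ENNReal.ofReal α := ENNReal.ofReal_le_ofReal (by linarith)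
  refine ⟨hpart1, ?_⟩
  have hsp : ∀ ω : Fin n → ℝ, 0 ≤ spacing k ω := by
    intro ω
    have := hw_oStat_le_oStat k (n - k + 1) hk1 (by omega) (by omega) ω
    rw [spacing]
    linarith
  apply csInf_le
  · refine ⟨0, fun t' ht' => ?_⟩
    by_contra hneg
    push_neg at hneg
    simp only [Set.mem_setOf_eq] at ht'
    have huniv : {ω : Fin n → ℝ | spacing k ω > t'} = Set.univ := by
      ext ω
      simp only [Set.mem_setOf_eq, Set.mem_univ, iff_true, gt_iff_lt]
      exact lt_of_lt_of_le hneg (hsp ω)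
    rw [huniv] at ht'
    haveI : IsProbabilityMeasure (sampleMeasure n φ) := by
      rw [sampleMeasure]; infer_instance
    rw [measure_univ] at ht'
    have h2 : ENNReal.ofReal α < 1 := ENNReal.ofReal_lt_one.mpr hα1
    exact absurd ht' (not_le.mpr h2)
  · exact hpart1
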